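/- For 0 ≤ k ≤ ⌊n/2⌋, the set B_k^* of elements of S_n of the form t_{n-1} t_{n-2} ··· t_{2k} · t_{2k-2} t_{2k-4} ··· t_2, where each t_j is either 1 or s_{i_j,j} for some 1 ≤ i_j ≤ j, has exactly n!/(2^k · k!) elements. -/

import Mathlib

/-- The simple transposition `s_i = (i, i+1)` (1-based) in the symmetric group on `n` letters,
realized as a permutation of `Fin n`; it is the identity for out-of-range indices. -/
def sgen (n i : ℕ) : Equiv.Perm (Fin n) :=
  if h : 1 ≤ i ∧ i < n then Equiv.swap ⟨i - 1, by omega⟩ ⟨i, h.2⟩ else 1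

/-- The product `s_{i,j} = s_i s_{i+1} ⋯ s_j` (for `i ≤ j`). -/
def sij (n i j : ℕ) : Equiv.Perm (Fin n) :=
  ((List.range (j + 1 - i)).map fun t => sgen n (i + t)).prod

/-- The decreasing list of indices `n-1, n-2, …, 2k, 2k-2, 2k-4, …, 2` used in the
definition of `B_k^*`. -/
def jlist (n k : ℕ) : List ℕ :=
  ((List.range (n - 2 * k)).map fun t => n - 1 - t) ++
    ((List.range (k - 1)).map fun t => 2 * k - 2 - 2 * t)

/-- The canonical parametrized factor: `T n j a = 1` if `a = j`, else `s_{a+1, j}`. -/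
def Tfac (n j a : ℕ) : Equiv.Perm (Fin n) :=
  if a = j then 1 else sij n (a + 1) j

lemma sgen_fix {n i : ℕ} {x : Fin n} (h : i < x.val) : sgen n i x = x := by
  unfold sgen
  split
  · apply Equiv.swap_apply_of_ne_of_ne
    · exact Fin.ne_of_val_ne (by show x.val ≠ i - 1; omega)
    · exact Fin.ne_of_val_ne (by show x.val ≠ i; omega)
  · rfl

lemma prod_fix {n : ℕ} {L : List (Equiv.Perm (Fin n))} {x : Fin n}
    (h : ∀ p ∈ L, p x = x) : L.prod x = x := by
  induction L with
  | nil => rfl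
  | cons a L ih =>
    simp only [List.prod_cons, Equiv.Perm.mul_apply]
    rw [ih fun p hp => h p (List.mem_cons_of_mem _ hp)]
    exact h a (List.mem_cons_self)

lemma sij_fix {n i j : ℕ} {x : Fin n} (h : j < x.val) : sij n i j x = x := by
  apply prod_fix
  intro p hp
  simp only [List.mem_map, List.mem_range] at hp
  obtain ⟨t, ht, rfl⟩ := hp
  exact sgen_fix (by omega)

lemma Tfac_fix {n j a : ℕ} {x : Fin n} (h : j < x.val) : Tfac n j a x = x := by
  unfold Tfac; split
  · rfl
  · exact sij_fix h

lemma sij_cons {n i j : ℕ} (h : i ≤ j) : sij n i j = sgen n i * sij n (i + 1) j := by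
  unfold sij
  have h1 : j + 1 - i = (j - i) + 1 := by omega
  rw [h1, List.range_succ_eq_map]
  simp only [List.map_cons, List.prod_cons, List.map_map, Nat.add_zero]
  congr 1
  have h2 : j + 1 - (i + 1) = j - i := by omega
  rw [h2]
  congr 1
  apply List.map_congr_left
  intro t _
  simp only [Function.comp_apply]
  congr 1
  omega

lemma sgen_apply_self {n i : ℕ} (h1 : 1 ≤ i) (h2 : i < n) :
    sgen n i ⟨i, h2⟩ = ⟨i - 1, by omega⟩ := by
  unfold sgen
  rw [dif_pos ⟨h1, h2⟩, Equiv.swap_apply_right]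

lemma sij_apply_j {n : ℕ} {i j : ℕ} (h1 : 1 ≤ i) (h2 : i ≤ j) (h3 : j < n) :
    sij n i j ⟨j, h3⟩ = ⟨i - 1, by omega⟩ := by
  suffices H : ∀ m i, 1 ≤ i → i ≤ j → j - i = m →
      (sij n i j ⟨j, h3⟩ : Fin n).val = i - 1 by
    exact Fin.ext (H (j - i) i h1 h2 rfl)
  intro m
  induction m with
  | zero =>
    intro i h1 h2 hd
    have hij : i = j := by omega
    subst hij
    rw [sij_cons le_rfl]
    have he : sij n (i + 1) i = 1 := by
      unfold sij
      have : i + 1 - (i + 1) = 0 := by omega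
      rw [this]; rfl
    rw [he, mul_one, sgen_apply_self h1 h3]
  | succ m ih =>
    intro i h1 h2 hd
    rw [sij_cons h2]
    have hi : sij n (i + 1) j ⟨j, h3⟩ = ⟨i, by omega⟩ := by
      apply Fin.ext
      show _ = i
      rw [ih (i + 1) (by omega) (by omega) (by omega)]; omega
    simp only [Equiv.Perm.mul_apply, hi]
    rw [sgen_apply_self h1 (by omega)]

lemma Tfac_apply_j {n j a : ℕ} (ha : a ≤ j) (hj : j < n) :
    Tfac n j a ⟨j, hj⟩ = ⟨a, by omega⟩ := by
  unfold Tfac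
  split
  · next h => subst h; rfl
  · next h =>
    rw [sij_apply_j (by omega) (by omega) hj]
    apply Fin.ext
    show a + 1 - 1 = a
    omega

lemma prod_pairs_fix {n : ℕ} {L : List (ℕ × ℕ)} {x : Fin n}
    (h : ∀ p ∈ L, p.1 < x.val) :
    (L.map fun p => Tfac n p.1 p.2).prod x = x := by
  apply prod_fix
  intro q hq
  simp only [List.mem_map] at hq
  obtain ⟨p, hp, rfl⟩ := hq
  exact Tfac_fix (h p hp)

lemma pairs_inj {n : ℕ} : ∀ (L M : List (ℕ × ℕ)),
    (L.map Prod.fst).Pairwise (· > ·) →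
    L.map Prod.fst = M.map Prod.fst →
    (∀ p ∈ L, p.2 ≤ p.1 ∧ p.1 < n) →
    (∀ p ∈ M, p.2 ≤ p.1) →
    (L.map fun p => Tfac n p.1 p.2).prod = (M.map fun p => Tfac n p.1 p.2).prod →
    L = M := by
  intro L
  induction L with
  | nil =>
    intro M _ hM _ _ _
    cases M with
    | nil => rfl
    | cons q M => simp at hM
  | cons p L ih =>
    intro M hs hM hbL hbM hprod
    cases M with
    | nil => simp at hM
    | cons q M =>
      simp only [List.map_cons, List.cons.injEq] at hM
      obtain ⟨hfst, hM'⟩ := hM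
      obtain ⟨p1, p2⟩ := p
      obtain ⟨q1, q2⟩ := q
      have hq1 : p1 = q1 := hfst
      subst hq1
      have hpn : p1 < n := (hbL (p1, p2) (List.mem_cons_self)).2
      have hpb : p2 ≤ p1 := (hbL (p1, p2) (List.mem_cons_self)).1
      have hqb : q2 ≤ p1 := hbM (p1, q2) (List.mem_cons_self)
      have hsc := List.pairwise_cons.mp hs
      -- evaluate both products at ⟨p1, hpn⟩
      have heval := congrArg (fun w : Equiv.Perm (Fin n) => w ⟨p1, hpn⟩) hprod
      simp only [List.map_cons, List.prod_cons, Equiv.Perm.mul_apply] at heval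
      rw [prod_pairs_fix (fun r hr => hsc.1 r.1 (List.mem_map_of_mem (f := Prod.fst) hr)),
        prod_pairs_fix (fun r hr => by
          have : r.1 ∈ L.map Prod.fst := hM' ▸ List.mem_map_of_mem (f := Prod.fst) hr
          exact hsc.1 r.1 this)] at heval
      have hval : p2 = q2 := by
        rw [Tfac_apply_j hpb hpn, Tfac_apply_j hqb hpn] at heval
        exact (Fin.mk.injEq _ _ _ _).mp heval
      subst hval
      congr 1
      apply ih M (List.pairwise_cons.mp hs).2 hM'
        (fun r hr => hbL r (List.mem_cons_of_mem _ hr))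
        (fun r hr => hbM r (List.mem_cons_of_mem _ hr))
      simp only [List.map_cons, List.prod_cons] at hprod
      exact mul_left_cancel hprod

lemma sorted_map_range {m : ℕ} {f : ℕ → ℕ} (hf : ∀ a b, a < b → b < m → f b < f a) :
    ((List.range m).map f).Pairwise (· > ·) := by
  rw [List.pairwise_iff_get]
  intro i j hij
  simp only [List.get_eq_getElem, List.getElem_map, List.getElem_range]
  have hj : (j : ℕ) < m := by
    have := j.isLt
    simpa using this
  exact hf i j hij hj

lemma jlist_sorted (n k : ℕ) (hk : 2 * k ≤ n) : (jlist n k).Pairwise (· > ·) := by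
  unfold jlist
  rw [List.pairwise_append]
  refine ⟨sorted_map_range fun a b hab hb => by omega,
    sorted_map_range fun a b hab hb => by omega, ?_⟩
  intro a ha b hb
  simp only [List.mem_map, List.mem_range] at ha hb
  obtain ⟨t, ht, rfl⟩ := ha
  obtain ⟨u, hu, rfl⟩ := hb
  omega

lemma jlist_lt (n k : ℕ) (hk : 2 * k ≤ n) : ∀ j ∈ jlist n k, j < n := by
  intro j hj
  unfold jlist at hj
  simp only [List.mem_append, List.mem_map, List.mem_range] at hj
  rcases hj with ⟨t, ht, rfl⟩ | ⟨t, ht, rfl⟩ <;> omega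

lemma jlist_nodup (n k : ℕ) (hk : 2 * k ≤ n) : (jlist n k).Nodup :=
  (jlist_sorted n k hk).imp fun h => Nat.ne_of_gt h

lemma desc_prod (n : ℕ) : ∀ m, m ≤ n →
    (((List.range m).map fun t => n - t)).prod * (n - m).factorial = n.factorial := by
  intro m
  induction m with
  | zero => simp
  | succ m ih =>
    intro hm
    rw [List.range_succ, List.map_append, List.prod_append]
    simp only [List.map_cons, List.map_nil, List.prod_cons, List.prod_nil, mul_one]
    have h1 : n - m = (n - (m + 1)) + 1 := by omega
    calc ((List.range m).map fun t => n - t).prod * (n - m) * (n - (m + 1)).factorial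
        = ((List.range m).map fun t => n - t).prod * ((n - (m + 1) + 1) * (n - (m + 1)).factorial) := by
          rw [← h1]; ring
      _ = ((List.range m).map fun t => n - t).prod * (n - m).factorial := by
          rw [← Nat.factorial_succ, ← h1]
      _ = n.factorial := ih (by omega)

lemma odd_prod : ∀ k : ℕ,
    (((List.range (k - 1)).map fun t => 2 * k - 2 - 2 * t + 1)).prod *
      (2 ^ k * k.factorial) = (2 * k).factorial := by
  intro k
  induction k with
  | zero => simp
  | succ K ih =>
    cases K with
    | zero => norm_num
    | succ K' =>
      set K := K' + 1 with hK
      -- goal about k = K + 1, range (K + 1 - 1) = range K, K ≥ 1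
      have hpeel : ((List.range (K + 1 - 1)).map fun t => 2 * (K + 1) - 2 - 2 * t + 1).prod
          = (2 * K + 1) * ((List.range (K - 1)).map fun t => 2 * K - 2 - 2 * t + 1).prod := by
        have h0 : K + 1 - 1 = (K - 1) + 1 := by omega
        rw [h0, List.range_succ_eq_map]
        simp only [List.map_cons, List.prod_cons, List.map_map]
        have e1 : 2 * (K + 1) - 2 - 2 * 0 + 1 = 2 * K + 1 := by omega
        rw [e1]
        congr 1
        congr 1
        apply List.map_congr_left
        intro t _
        simp only [Function.comp_apply]
        omega
      rw [hpeel]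
      calc (2 * K + 1) * ((List.range (K - 1)).map fun t => 2 * K - 2 - 2 * t + 1).prod *
            (2 ^ (K + 1) * (K + 1).factorial)
          = (2 * K + 1) * (2 * (K + 1)) *
            (((List.range (K - 1)).map fun t => 2 * K - 2 - 2 * t + 1).prod *
              (2 ^ K * K.factorial)) := by
            rw [pow_succ, Nat.factorial_succ]; ring
        _ = (2 * K + 1) * (2 * (K + 1)) * (2 * K).factorial := by rw [ih]
        _ = (2 * (K + 1)).factorial := by
            have h2 : 2 * (K + 1) = (2 * K + 1) + 1 := by omega
            rw [h2, Nat.factorial_succ, Nat.factorial_succ]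
            ring

lemma jlist_prod_succ (n k : ℕ) (hk : 2 * k ≤ n) :
    ((jlist n k).map (· + 1)).prod * (2 ^ k * k.factorial) = n.factorial := by
  unfold jlist
  rw [List.map_append, List.prod_append, List.map_map, List.map_map]
  have h1 : (List.map ((· + 1) ∘ fun t => n - 1 - t) (List.range (n - 2 * k))).prod
      = (List.map (fun t => n - t) (List.range (n - 2 * k))).prod := by
    congr 1
    apply List.map_congr_left
    intro t ht
    simp only [List.mem_range] at ht
    simp only [Function.comp_apply]
    omega
  have h2 : (List.map ((· + 1) ∘ fun t => 2 * k - 2 - 2 * t) (List.range (k - 1))).prod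
      = (List.map (fun t => 2 * k - 2 - 2 * t + 1) (List.range (k - 1))).prod := by
    congr 1
  rw [h1, h2]
  calc (List.map (fun t => n - t) (List.range (n - 2 * k))).prod *
        (List.map (fun t => 2 * k - 2 - 2 * t + 1) (List.range (k - 1))).prod *
        (2 ^ k * k.factorial)
      = (List.map (fun t => n - t) (List.range (n - 2 * k))).prod *
        ((List.map (fun t => 2 * k - 2 - 2 * t + 1) (List.range (k - 1))).prod *
          (2 ^ k * k.factorial)) := by ring
    _ = (List.map (fun t => n - t) (List.range (n - 2 * k))).prod * (2 * k).factorial := by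
        rw [odd_prod]
    _ = n.factorial := by
        have hd := desc_prod n (n - 2 * k) (by omega)
        rwa [show n - (n - 2 * k) = 2 * k from by omega] at hd

/-- For `0 ≤ k ≤ ⌊n/2⌋`, the set `B_k^*` of products
`t_{n-1} t_{n-2} ⋯ t_{2k} t_{2k-2} t_{2k-4} ⋯ t_2`, with each `t_j = 1` or `t_j = s_{i_j, j}`
for some `1 ≤ i_j ≤ j`, has exactly `n! / (2^k k!)` elements. -/
theorem Bk_star_card (n k : ℕ) (hk : 2 * k ≤ n) :
    Nat.card {w : Equiv.Perm (Fin n) | ∃ t : ℕ → Equiv.Perm (Fin n),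
      (∀ j ∈ jlist n k, t j = 1 ∨ ∃ i, 1 ≤ i ∧ i ≤ j ∧ t j = sij n i j) ∧
      ((jlist n k).map t).prod = w} =
      n.factorial / (2 ^ k * k.factorial) := by
  set l := jlist n k with hl
  have hlt : ∀ j ∈ l, j < n := jlist_lt n k hk
  have hsort : (l.map id).Pairwise (· > ·) := by
    rw [List.map_id]; exact jlist_sorted n k hk
  have hsort' : l.Pairwise (· > ·) := jlist_sorted n k hk
  have hnd : l.Nodup := jlist_nodup n k hk
  set P : (∀ i : Fin l.length, Fin (l.get i + 1)) → Equiv.Perm (Fin n) :=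
    fun c => ((List.finRange l.length).map fun i => Tfac n (l.get i) (c i).val).prod with hPdef
  have hfst : ∀ c : ∀ i : Fin l.length, Fin (l.get i + 1),
      (((List.finRange l.length).map fun i => (l.get i, (c i).val)).map Prod.fst) = l := by
    intro c
    rw [List.map_map]
    exact List.map_get_finRange l
  have hP : Function.Injective P := by
    intro c c' hcc
    have key := pairs_inj (n := n)
      ((List.finRange l.length).map fun i => (l.get i, (c i).val))
      ((List.finRange l.length).map fun i => (l.get i, (c' i).val))
      (by rw [hfst]; exact hsort')
      (by rw [hfst, hfst])
      (by
        intro p hp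
        simp only [List.mem_map, List.mem_finRange, true_and] at hp
        obtain ⟨i, rfl⟩ := hp
        exact ⟨by have := (c i).isLt; omega, hlt _ (l.get_mem i)⟩)
      (by
        intro p hp
        simp only [List.mem_map, List.mem_finRange, true_and] at hp
        obtain ⟨i, rfl⟩ := hp
        have := (c' i).isLt; omega)
      (by
        rw [List.map_map, List.map_map]
        exact hcc)
    funext i
    have h2 := List.getElem_of_eq key (by simpa using i.isLt : (i : ℕ) <
      ((List.finRange l.length).map fun i => (l.get i, (c i).val)).length)
    simp only [List.getElem_map, Prod.mk.injEq] at h2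
    rw [show ((List.finRange l.length)[(i : ℕ)]'(by simpa using i.isLt)) = i by simp] at h2
    exact Fin.ext h2.2
  have hset : {w : Equiv.Perm (Fin n) | ∃ t : ℕ → Equiv.Perm (Fin n),
      (∀ j ∈ l, t j = 1 ∨ ∃ i, 1 ≤ i ∧ i ≤ j ∧ t j = sij n i j) ∧
      (l.map t).prod = w} = Set.range P := by
    ext w
    simp only [Set.mem_setOf_eq, Set.mem_range]
    constructor
    · rintro ⟨t, hcond, rfl⟩
      refine ⟨fun i => ⟨min ((t (l.get i) ⟨l.get i, hlt _ (l.get_mem i)⟩).val) (l.get i),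
        by omega⟩, ?_⟩
      rw [hPdef]
      simp only
      congr 1
      conv_rhs => rw [← List.map_get_finRange l]
      rw [List.map_map]
      apply List.map_congr_left
      intro i _
      simp only [Function.comp_apply]
      have hj : l.get i < n := hlt _ (l.get_mem i)
      rcases hcond (l.get i) (l.get_mem i) with h1 | ⟨i', hi1, hi2, heq⟩
      · have hv : (t (l.get i) ⟨l.get i, hj⟩).val = l.get i := by rw [h1]; rfl
        rw [hv, min_self]
        unfold Tfac
        rw [if_pos rfl, h1]
      · have hv : (t (l.get i) ⟨l.get i, hj⟩).val = i' - 1 := by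
          rw [heq, sij_apply_j hi1 hi2 hj]
        rw [hv]
        have hmin : min (i' - 1) (l.get i) = i' - 1 := by omega
        rw [hmin]
        unfold Tfac
        rw [if_neg (by omega), heq]
        congr 1
        omega
    · rintro ⟨c, rfl⟩
      refine ⟨fun j => if h : j ∈ l then
        Tfac n j ((c ⟨l.idxOf j, List.idxOf_lt_length_iff.2 h⟩).val) else 1, ?_, ?_⟩
      · intro j hj
        beta_reduce
        rw [dif_pos hj]
        -- rest unchanged
        have hga : l.get ⟨l.idxOf j, List.idxOf_lt_length_iff.2 hj⟩ = j :=
          List.idxOf_get _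
        have ha : (c ⟨l.idxOf j, List.idxOf_lt_length_iff.2 hj⟩).val ≤ j := by
          have := (c ⟨l.idxOf j, List.idxOf_lt_length_iff.2 hj⟩).isLt
          omega
        set a := (c ⟨l.idxOf j, List.idxOf_lt_length_iff.2 hj⟩).val with hadef
        unfold Tfac
        by_cases haj : a = j
        · rw [if_pos haj]; left; rfl
        · rw [if_neg haj]
          right
          exact ⟨a + 1, by omega, by omega, rfl⟩
      · rw [hPdef]
        simp only
        symm
        have hmap : ∀ i ∈ List.finRange l.length,
            Tfac n (l.get i) ((c i).val) =
            (fun j => if h : j ∈ l then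
              Tfac n j ((c ⟨l.idxOf j, List.idxOf_lt_length_iff.2 h⟩).val) else 1) (l.get i) := by
          intro i _
          beta_reduce
          rw [dif_pos (l.get_mem i)]
          have hidx : (⟨l.idxOf (l.get i), List.idxOf_lt_length_iff.2 (l.get_mem i)⟩ :
              Fin l.length) = i := by
            apply Fin.ext
            simpa using List.get_idxOf hnd i
          rw [hidx]
        calc (List.map (fun i => Tfac n (l.get i) ((c i).val)) (List.finRange l.length)).prod
            = (List.map (fun i => (fun j => if h : j ∈ l then
                Tfac n j ((c ⟨l.idxOf j, List.idxOf_lt_length_iff.2 h⟩).val) else 1) (l.get i))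
                (List.finRange l.length)).prod := by
              congr 1
              exact List.map_congr_left hmap
          _ = (List.map (fun j => if h : j ∈ l then
                Tfac n j ((c ⟨l.idxOf j, List.idxOf_lt_length_iff.2 h⟩).val) else 1)
                (List.map l.get (List.finRange l.length))).prod := by
              rw [List.map_map]
              rfl
          _ = _ := by rw [List.map_get_finRange]
  rw [hset]
  rw [Nat.card_range_of_injective hP]
  rw [Nat.card_eq_fintype_card]
  rw [Fintype.card_pi]
  simp only [Fintype.card_fin]
  have hprod : ∏ i : Fin l.length, (l.get i + 1) = (l.map (· + 1)).prod := by
    rw [← Fin.prod_univ_fun_getElem l (· + 1)]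
    rfl
  rw [hprod]
  exact (Nat.div_eq_of_eq_mul_left
    (by positivity) (jlist_prod_succ n k hk).symm).symm
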